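/- Let H be a finite subset of S with Q̄ ⊆ H. Suppose f ∈ S_1 and f ≡_i 0 (mod H) for some i > 0 (i.e., f ∈ V_{H,i}). Let g = Σ_r c_r x^r ∈ k[x]. Then there exists f' ∈ S_1 such that L(g)∘f − f' lies in the ideal ⟨Q̄⟩ generated by Q̄, and f' ≡_r 0 (mod H) where r = max(i, q). Here L(g)∘f denotes Σ_r c_r f^{q^r}. -/

import Mathlib

open MvPolynomial

noncomputable section

def Vspace {σ K : Type*} [Field K] (G : Set (MvPolynomial σ K)) (i : ℕ) :
    Submodule K (MvPolynomial σ K) :=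
  sInf {W : Submodule K (MvPolynomial σ K) |
    (∀ f ∈ W, MvPolynomial.totalDegree f ≤ i) ∧
    (∀ g ∈ G, MvPolynomial.totalDegree g ≤ i → g ∈ W) ∧
    ∀ g ∈ W, ∀ h : MvPolynomial σ K,
      MvPolynomial.totalDegree (h * g) ≤ i → h * g ∈ W}

def lastFallDegree {σ K : Type*} [Field K] (G : Set (MvPolynomial σ K)) : ℕ :=
  sSup {d : ℕ | 0 < d ∧
    Vspace G d ⊓ MvPolynomial.restrictTotalDegree σ K (d - 1) ≠ Vspace G (d - 1)}

/-- `ℓ(h(x_i))` : the linear form `∑_j h_j x_{ij}` in `S = k[x_{ij}]`,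
for a univariate polynomial `h` of degree `< n'`. -/
def ellAt {k : Type*} [Field k] (m n' : ℕ) (i : Fin m) (h : Polynomial k) :
    MvPolynomial (Fin m × Fin n') k :=
  ∑ j : Fin n', C (h.coeff (j : ℕ)) * X (i, j)

/-- `ℓ(f)` for `f = ∑_i f_i(x_i)` with `deg f_i < n'`. -/
def ellSum {k : Type*} [Field k] (m n' : ℕ) (φ : Fin m → Polynomial k) :
    MvPolynomial (Fin m × Fin n') k :=
  ∑ i : Fin m, ellAt m n' i (φ i)

/-- `Q̄_r` : the set of relations `x_{ij}^q - x_{i,j+1}` (for `j < n'-1`) and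
`x_{i,n'-1}^q - ℓ(g_W(x_i))`, restricted to indices `i ≥ r`. -/
def QbarFrom {k : Type*} [Field k] (m n' q r : ℕ) (gW : Polynomial k) :
    Set (MvPolynomial (Fin m × Fin n') k) :=
  {P | ∃ (i : Fin m) (j : Fin n') (hj : (j : ℕ) + 1 < n'), r ≤ (i : ℕ) ∧
        P = X (i, j) ^ q - X (i, ⟨(j : ℕ) + 1, hj⟩)} ∪
  {P | ∃ (i : Fin m) (j : Fin n'), r ≤ (i : ℕ) ∧ (j : ℕ) + 1 = n' ∧
        P = X (i, j) ^ q - ellAt m n' i gW}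

/-- `S_{1r}` : the space of `k`-linear forms in the variables `x_{ij}` with `i ≥ r`. -/
def S1r {k : Type*} [Field k] (m n' : ℕ) (r : ℕ) :
    Submodule k (MvPolynomial (Fin m × Fin n') k) :=
  Submodule.span k {P | ∃ p : Fin m × Fin n', r ≤ (p.1 : ℕ) ∧ P = X p}

/-- `L(h)` for `h = ∑_i h_i(x_i)` with `deg h_i < n` : the `k'`-linearized polynomial
`∑_i ∑_j h_{ij} x_i^{q^j}`. -/
def Lmap {k : Type*} [Field k] (m n q : ℕ) (h : Fin m → Polynomial k) :
    MvPolynomial (Fin m) k :=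
  ∑ i : Fin m, ∑ j : Fin n, C ((h i).coeff (j : ℕ)) * X i ^ q ^ (j : ℕ)

/-- `F` is reducible for `W` (where `W` corresponds to `f_W`): for each `i < m-1`,
either `V_{Ḡ,q} ∩ S_{1i} = V_{Ḡ,q} ∩ S_{1,i+1}`, or some `k'`-linearized `L(f_i)`,
`f_i = ∑_{j≥i} g_{ij}` with `deg g_{ij} < n'`, has `ℓ(f_i) ∈ V_{Ḡ,q} ∩ S_{1i}` and
`gcd(g_{ii}, f_W) = 1`. -/
def ReducibleFor {k' k : Type*} [Field k'] [Field k] [Algebra k' k]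
    (q m n' : ℕ) (fW : Polynomial k')
    (Gbar : Set (MvPolynomial (Fin m × Fin n') k)) : Prop :=
  ∀ i : Fin m, (i : ℕ) + 1 < m →
    (Vspace Gbar q ⊓ S1r m n' (i : ℕ) = Vspace Gbar q ⊓ S1r m n' ((i : ℕ) + 1)) ∨
    ∃ φ : Fin m → Polynomial k,
      (∀ j, (φ j).natDegree < n') ∧
      (∀ j : Fin m, (j : ℕ) < (i : ℕ) → φ j = 0) ∧
      ellSum m n' φ ∈ Vspace Gbar q ⊓ S1r m n' (i : ℕ) ∧
      IsCoprime (φ i) (fW.map (algebraMap k' k))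

section VspaceLemmas

variable {σ K : Type*} [Field K] {G : Set (MvPolynomial σ K)} {i j : ℕ}

lemma Vspace_le_restrict (G : Set (MvPolynomial σ K)) (i : ℕ) :
    Vspace G i ≤ MvPolynomial.restrictTotalDegree σ K i := by
  refine sInf_le ⟨fun f hf => (mem_restrictTotalDegree σ i f).1 hf, ?_, ?_⟩
  · exact fun g _ hd => (mem_restrictTotalDegree σ i g).2 hd
  · exact fun g _ h hd => (mem_restrictTotalDegree σ i _).2 hd

lemma Vspace_deg_le {f : MvPolynomial σ K} (hf : f ∈ Vspace G i) :
    f.totalDegree ≤ i :=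
  (mem_restrictTotalDegree σ i f).1 (Vspace_le_restrict G i hf)

lemma Vspace_mem_of {g : MvPolynomial σ K} (hg : g ∈ G) (hd : g.totalDegree ≤ i) :
    g ∈ Vspace G i :=
  Submodule.mem_sInf.2 fun _ hW => hW.2.1 g hg hd

lemma Vspace_mul_mem {g : MvPolynomial σ K} (hg : g ∈ Vspace G i)
    (h : MvPolynomial σ K) (hd : (h * g).totalDegree ≤ i) : h * g ∈ Vspace G i :=
  Submodule.mem_sInf.2 fun W hW => hW.2.2 g (Submodule.mem_sInf.1 hg W hW) h hd

lemma Vspace_mono (hij : i ≤ j) : Vspace G i ≤ Vspace G j := by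
  have h : Vspace G i ≤ Vspace G j ⊓ MvPolynomial.restrictTotalDegree σ K i := by
    refine sInf_le ⟨fun f hf => (mem_restrictTotalDegree σ i f).1 hf.2, ?_, ?_⟩
    · exact fun g hg hd =>
        ⟨Vspace_mem_of hg (hd.trans hij), (mem_restrictTotalDegree σ i g).2 hd⟩
    · exact fun g hg h hd =>
        ⟨Vspace_mul_mem hg.1 h (hd.trans hij), (mem_restrictTotalDegree σ i _).2 hd⟩
  exact h.trans inf_le_left

end VspaceLemmas

section StepLemmas

variable {k : Type*} [Field k] {m n' q : ℕ} {gW' : Polynomial k}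

/-- The linear form replacing `X p ^ q` modulo `Q̄`. -/
def repl (m n' : ℕ) (gW' : Polynomial k) (p : Fin m × Fin n') :
    MvPolynomial (Fin m × Fin n') k :=
  if h : (p.2 : ℕ) + 1 < n' then X (p.1, ⟨(p.2 : ℕ) + 1, h⟩) else ellAt m n' p.1 gW'

lemma repl_rel (q : ℕ) (p : Fin m × Fin n') :
    X p ^ q - repl m n' gW' p ∈ QbarFrom m n' q 0 gW' := by
  unfold repl
  split_ifs with h
  · exact Or.inl ⟨p.1, p.2, h, Nat.zero_le _, rfl⟩
  · exact Or.inr ⟨p.1, p.2, Nat.zero_le _, by omega, rfl⟩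

lemma X_mem_S1r (p : Fin m × Fin n') : (X p : MvPolynomial (Fin m × Fin n') k) ∈ S1r m n' 0 :=
  Submodule.subset_span ⟨p, Nat.zero_le _, rfl⟩

lemma ellAt_mem_S1r (i : Fin m) (h : Polynomial k) : ellAt m n' i h ∈ S1r m n' 0 := by
  refine Submodule.sum_mem _ fun j _ => ?_
  rw [← smul_eq_C_mul]
  exact Submodule.smul_mem _ _ (X_mem_S1r _)

lemma repl_mem_S1r (p : Fin m × Fin n') : repl m n' gW' p ∈ S1r m n' 0 := by
  unfold repl
  split_ifs with h
  · exact X_mem_S1r _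
  · exact ellAt_mem_S1r _ _

lemma S1r_le_restrict :
    S1r (k := k) m n' 0 ≤ MvPolynomial.restrictTotalDegree _ k 1 := by
  refine Submodule.span_le.2 fun P hP => ?_
  obtain ⟨p, -, rfl⟩ := hP
  exact (mem_restrictTotalDegree _ 1 _).2 (le_of_eq (totalDegree_X p))

lemma deg_le_one_of_mem_S1r {f : MvPolynomial (Fin m × Fin n') k} (hf : f ∈ S1r m n' 0) :
    f.totalDegree ≤ 1 :=
  (mem_restrictTotalDegree _ 1 f).1 (S1r_le_restrict hf)

/-- One Frobenius step: `f^q` is congruent to a linear form modulo `⟨Q̄⟩`. -/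
lemma frobenius_step {p e : ℕ} [Fact p.Prime] [CharP k p]
    (hqpe : q = p ^ e) (hq1 : 1 ≤ q)
    {H : Set (MvPolynomial (Fin m × Fin n') k)}
    (hQH : QbarFrom m n' q 0 gW' ⊆ H) {r : ℕ} (hqr : q ≤ r)
    {f : MvPolynomial (Fin m × Fin n') k}
    (hf : f ∈ S1r m n' 0) (hfV : f ∈ Vspace H r) :
    ∃ f₁, f₁ ∈ S1r m n' 0 ∧
      f ^ q - f₁ ∈ Ideal.span (QbarFrom m n' q 0 gW') ∧ f₁ ∈ Vspace H r := by
  have hset : {P : MvPolynomial (Fin m × Fin n') k | ∃ p, (0 : ℕ) ≤ (p.1 : ℕ) ∧ P = X p}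
      = Set.range (X : Fin m × Fin n' → MvPolynomial (Fin m × Fin n') k) := by
    ext P
    simp [eq_comm]
  have hf' : f ∈ Submodule.span k
      (Set.range (X : Fin m × Fin n' → MvPolynomial (Fin m × Fin n') k)) := by
    rw [← hset]; exact hf
  obtain ⟨c, hc⟩ := (Submodule.mem_span_range_iff_exists_fun k).1 hf'
  have hfq : f ^ q = ∑ p : Fin m × Fin n', c p ^ q • X p ^ q := by
    rw [← hc, hqpe, sum_pow_char_pow]
    exact Finset.sum_congr rfl fun p _ => by rw [smul_pow, ← hqpe]
  refine ⟨∑ p : Fin m × Fin n', c p ^ q • repl m n' gW' p, ?_, ?_, ?_⟩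
  · exact Submodule.sum_mem _ fun p _ => Submodule.smul_mem _ _ (repl_mem_S1r p)
  · rw [hfq, ← Finset.sum_sub_distrib]
    refine Submodule.sum_mem _ fun p _ => ?_
    rw [← smul_sub, smul_eq_C_mul]
    exact Ideal.mul_mem_left _ _ (Ideal.subset_span (repl_rel q p))
  · have hdegf : f.totalDegree ≤ 1 := deg_le_one_of_mem_S1r hf
    have hfqV : f ^ q ∈ Vspace H r := by
      have hd : (f ^ (q - 1) * f).totalDegree ≤ r := by
        rw [pow_sub_one_mul (by omega : q ≠ 0)]
        calc (f ^ q).totalDegree ≤ q * f.totalDegree := totalDegree_pow f q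
          _ ≤ q * 1 := Nat.mul_le_mul_left q hdegf
          _ ≤ r := by omega
      have := Vspace_mul_mem hfV (f ^ (q - 1)) hd
      rwa [pow_sub_one_mul (by omega : q ≠ 0)] at this
    have hdiffV : f ^ q - ∑ p : Fin m × Fin n', c p ^ q • repl m n' gW' p ∈ Vspace H r := by
      rw [hfq, ← Finset.sum_sub_distrib]
      refine Submodule.sum_mem _ fun p _ => ?_
      rw [← smul_sub]
      refine Submodule.smul_mem _ _ (Vspace_mem_of (hQH (repl_rel q p)) ?_)
      calc (X p ^ q - repl m n' gW' p).totalDegree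
          ≤ max (X p ^ q : MvPolynomial (Fin m × Fin n') k).totalDegree
            (repl m n' gW' p).totalDegree := totalDegree_sub _ _
        _ ≤ r := by
            have h1 : (X p ^ q : MvPolynomial (Fin m × Fin n') k).totalDegree = q :=
              totalDegree_X_pow p q
            have h2 : (repl m n' gW' p).totalDegree ≤ 1 :=
              deg_le_one_of_mem_S1r (repl_mem_S1r p)
            omega
    have := Submodule.sub_mem _ hfqV hdiffV
    rwa [sub_sub_cancel] at this

end StepLemmas

/-- **Lemma 2.2.** Let `H ⊆ S` be finite with `Q̄ ⊆ H`.  If `f ∈ S₁` and `f ≡_i 0 (mod H)`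
for some `i > 0`, then for any `g = ∑_r c_r x^r ∈ k[x]` there is `f' ∈ S₁` with
`L(g)∘f - f' ∈ ⟨Q̄⟩` and `f' ≡_{max(i,q)} 0 (mod H)`, where `L(g)∘f = ∑_r c_r f^{q^r}`. -/
theorem linearized_of_linear_form_mod_Qbar
    {k' k : Type} [Field k'] [Fintype k'] [Field k] [Algebra k' k]
    (q n m : ℕ) (hq : q = Fintype.card k') (hn : 0 < n)
    (α : Module.Basis (Fin n) k' k)
    (fW : Polynomial k') (hmonic : fW.Monic) (hdvd : fW ∣ Polynomial.X ^ n - 1)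
    (n' : ℕ) (hn' : n' = fW.natDegree) (hn'pos : 0 < n')
    (gW : Polynomial k') (hgW : gW = Polynomial.X ^ n' - fW)
    (H : Set (MvPolynomial (Fin m × Fin n') k)) (hHfin : H.Finite)
    (hQH : QbarFrom m n' q 0 (gW.map (algebraMap k' k)) ⊆ H)
    (f : MvPolynomial (Fin m × Fin n') k) (hf : f ∈ S1r m n' 0)
    (i : ℕ) (hi : 0 < i) (hfH : f ∈ Vspace H i)
    (g : Polynomial k) :
    ∃ f' ∈ S1r m n' 0,
      (∑ r ∈ g.support, MvPolynomial.C (g.coeff r) * f ^ q ^ r) - f'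
          ∈ Ideal.span (QbarFrom m n' q 0 (gW.map (algebraMap k' k))) ∧
      f' ∈ Vspace H (max i q) := by
  classical
  -- Characteristic setup
  haveI : CharP k' (ringChar k') := ringChar.charP k'
  obtain ⟨e, hp, hcard⟩ := FiniteField.card k' (ringChar k')
  haveI : Fact (Nat.Prime (ringChar k')) := ⟨hp⟩
  haveI : CharP k (ringChar k') :=
    charP_of_injective_algebraMap (algebraMap k' k).injective _
  have hqpe : q = ringChar k' ^ (e : ℕ) := hq.trans hcard
  have hq1 : 1 ≤ q := by
    rw [hqpe]; exact Nat.one_le_pow _ _ hp.pos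
  have hqr : q ≤ max i q := le_max_right i q
  set gW' : Polynomial k := gW.map (algebraMap k' k) with hgW'
  -- Iterated Frobenius: each `f ^ (q ^ s)` is congruent to a linear form mod `⟨Q̄⟩`.
  have key : ∀ s : ℕ, ∃ fs, fs ∈ S1r m n' 0 ∧
      f ^ q ^ s - fs ∈ Ideal.span (QbarFrom m n' q 0 gW') ∧
      fs ∈ Vspace H (max i q) := by
    intro s
    induction s with
    | zero =>
      exact ⟨f, hf, by simp, Vspace_mono (le_max_left i q) hfH⟩
    | succ s ih =>
      obtain ⟨fs, h1, h2, h3⟩ := ih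
      obtain ⟨f₁, g1, g2, g3⟩ := frobenius_step hqpe hq1 hQH hqr h1 h3
      refine ⟨f₁, g1, ?_, g3⟩
      have hpow : (f ^ q ^ s - fs) ^ q = f ^ q ^ (s + 1) - fs ^ q := by
        rw [hqpe, sub_pow_char_pow, ← hqpe, ← pow_mul, ← pow_succ]
      have heq : f ^ q ^ (s + 1) - f₁ = (f ^ q ^ s - fs) ^ q + (fs ^ q - f₁) := by
        rw [hpow, sub_add_sub_cancel]
      rw [heq]
      exact Ideal.add_mem _ (Ideal.pow_mem_of_mem _ h2 q (by omega)) g2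
  choose F hF1 hF2 hF3 using key
  refine ⟨∑ r ∈ g.support, g.coeff r • F r, ?_, ?_, ?_⟩
  · exact Submodule.sum_mem _ fun r _ => Submodule.smul_mem _ _ (hF1 r)
  · rw [← Finset.sum_sub_distrib]
    refine Submodule.sum_mem _ fun r _ => ?_
    rw [smul_eq_C_mul, ← mul_sub]
    exact Ideal.mul_mem_left _ _ (hF2 r)
  · exact Submodule.sum_mem _ fun r _ => Submodule.smul_mem _ _ (hF3 r)

end
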